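/- Let B be exponentially distributed with rate μ > 0; let N be ℕ-valued with conditional distribution given B = b Poisson with mean λ·b (λ > 0); and let Ψ_1, Ψ_2, ... be i.i.d. nonnegative random variables with finite second moment, independent of (B, N). Define Υ = B + Σ_{i=1}^{N} Ψ_i. Then E[Υ] = 1/μ + (λ/μ)·E[Ψ_1], and E[Υ²] = 2/μ² + 4λ·E[Ψ_1]/μ² + λ·E[Ψ_1²]/μ + 2λ²·(E[Ψ_1])²/μ². -/

import Mathlib

open MeasureTheory ProbabilityTheory Real Set
open scoped ENNReal NNReal

namespace EST

lemma poisson_hasSum_id (r : ℝ≥0) :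
    HasSum (fun n : ℕ => (n : ℝ) * poissonPMFReal r n) r := by
  have h0 : HasSum (fun n : ℕ => ((n + 1 : ℕ) : ℝ) * poissonPMFReal r (n + 1)) r := by
    have : (fun n : ℕ => ((n + 1 : ℕ) : ℝ) * poissonPMFReal r (n + 1))
        = fun n : ℕ => (r : ℝ) * poissonPMFReal r n := by
      ext n
      simp only [poissonPMFReal, Nat.factorial_succ, Nat.cast_mul, Nat.cast_add, Nat.cast_one]
      field_simp
      ring
    rw [this]
    simpa [poissonPMFReal] using (poissonPMFRealSum r).mul_left (r : ℝ)
  have := (hasSum_nat_add_iff (f := fun n : ℕ => (n : ℝ) * poissonPMFReal r n) 1).mp h0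
  simpa using this

lemma poisson_hasSum_sub (r : ℝ≥0) :
    HasSum (fun n : ℕ => ((n * (n - 1) : ℕ) : ℝ) * poissonPMFReal r n) ((r : ℝ) ^ 2) := by
  have h0 : HasSum (fun n : ℕ => (((n + 2) * ((n + 2) - 1) : ℕ) : ℝ) * poissonPMFReal r (n + 2))
      ((r : ℝ) ^ 2) := by
    have : (fun n : ℕ => (((n + 2) * ((n + 2) - 1) : ℕ) : ℝ) * poissonPMFReal r (n + 2))
        = fun n : ℕ => (r : ℝ) ^ 2 * poissonPMFReal r n := by
      ext n
      simp only [poissonPMFReal, show n + 2 - 1 = n + 1 by omega, Nat.add_sub_cancel, Nat.factorial_succ, Nat.cast_mul,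
        Nat.cast_add, Nat.cast_one, Nat.cast_ofNat]
      field_simp
      ring
    rw [this]
    simpa [poissonPMFReal] using (poissonPMFRealSum r).mul_left ((r : ℝ) ^ 2)
  have := (hasSum_nat_add_iff
    (f := fun n : ℕ => ((n * (n - 1) : ℕ) : ℝ) * poissonPMFReal r n) 2).mp h0
  simpa [Finset.sum_range_succ] using this



lemma poisson_lintegral (r : ℝ≥0) (q : ℕ → ℝ≥0∞) :
    ∫⁻ n, q n ∂poissonMeasure r = ∑' n, ENNReal.ofReal (poissonPMFReal r n) * q n := by
  rw [poissonMeasure, lintegral_countable']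
  refine tsum_congr fun n => ?_
  rw [Measure.sum_smul_dirac_singleton, mul_comm]
  rfl

lemma poisson_lintegral_of_hasSum (r : ℝ≥0) (g : ℕ → ℝ) (hg : ∀ n, 0 ≤ g n) {a : ℝ}
    (h : HasSum (fun n => g n * poissonPMFReal r n) a) :
    ∫⁻ n, ENNReal.ofReal (g n) ∂poissonMeasure r = ENNReal.ofReal a := by
  rw [poisson_lintegral]
  have : ∀ n : ℕ, ENNReal.ofReal (poissonPMFReal r n) * ENNReal.ofReal (g n)
      = ENNReal.ofReal (g n * poissonPMFReal r n) := fun n => by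
    rw [← ENNReal.ofReal_mul poissonPMFReal_nonneg, mul_comm]
  simp_rw [this]
  rw [← ENNReal.ofReal_tsum_of_nonneg (fun n => mul_nonneg (hg n) poissonPMFReal_nonneg)
    h.summable, h.tsum_eq]

lemma poisson_mean (r : ℝ≥0) :
    ∫⁻ n, (n : ℝ≥0∞) ∂poissonMeasure r = (r : ℝ≥0∞) := by
  have := poisson_lintegral_of_hasSum r (fun n => (n : ℝ)) (fun n => Nat.cast_nonneg n)
    (poisson_hasSum_id r)
  simpa [ENNReal.ofReal_natCast, ENNReal.ofReal_coe_nnreal] using this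

lemma poisson_factorial2 (r : ℝ≥0) :
    ∫⁻ n, ((n * (n - 1) : ℕ) : ℝ≥0∞) ∂poissonMeasure r = (r : ℝ≥0∞) ^ 2 := by
  have := poisson_lintegral_of_hasSum r (fun n => ((n * (n - 1) : ℕ) : ℝ))
    (fun n => Nat.cast_nonneg _) (poisson_hasSum_sub r)
  have h2 : ENNReal.ofReal ((r : ℝ) ^ 2) = (r : ℝ≥0∞) ^ 2 := by
    rw [ENNReal.ofReal_pow (r.coe_nonneg), ENNReal.ofReal_coe_nnreal]
  rw [lintegral_congr fun n => (ENNReal.ofReal_natCast (n * (n - 1))).symm, this, h2]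



lemma exp_ae_nonneg {mu : ℝ} : ∀ᵐ b ∂expMeasure mu, 0 ≤ b := by
  rw [ae_iff]
  have h : {b : ℝ | ¬ 0 ≤ b} = Iio 0 := by ext b; simp [mem_Iio, not_le]
  rw [h, expMeasure, gammaMeasure, withDensity_apply _ measurableSet_Iio]
  exact lintegral_gammaPDF_of_nonpos le_rfl

lemma integrableOn_pow_mul_exp {mu : ℝ} (hmu : 0 < mu) (k : ℕ) :
    IntegrableOn (fun b : ℝ => mu * Real.exp (-(mu * b)) * b ^ k) (Ici 0) := by
  have h := integrableOn_rpow_mul_exp_neg_mul_rpow (p := 1) (s := (k : ℝ)) (b := mu)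
    (lt_of_lt_of_le neg_one_lt_zero (Nat.cast_nonneg k)) zero_lt_one hmu
  have h2 : IntegrableOn (fun b : ℝ => b ^ k * Real.exp (-(mu * b))) (Ioi 0) := by
    refine h.congr_fun (fun x hx => ?_) measurableSet_Ioi
    simp only [Real.rpow_one, Real.rpow_natCast, neg_mul]
  rw [integrableOn_Ici_iff_integrableOn_Ioi]
  refine (h2.const_mul mu).congr ?_
  filter_upwards with x
  ring

lemma exp_moment {mu : ℝ} (hmu : 0 < mu) (k : ℕ) :
    ∫⁻ b, (ENNReal.ofReal b) ^ k ∂expMeasure mu = ENNReal.ofReal ((Nat.factorial k : ℝ) / mu ^ k) := by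
  have hpdf : Measurable fun b => gammaPDF 1 mu b :=
    (measurable_gammaPDFReal 1 mu).ennreal_ofReal
  rw [expMeasure, gammaMeasure,
    lintegral_withDensity_eq_lintegral_mul _ hpdf
      (ENNReal.measurable_ofReal.pow_const k)]
  simp only [Pi.mul_apply]
  rw [← lintegral_add_compl (μ := volume)
    (f := fun b => gammaPDF 1 mu b * (ENNReal.ofReal b) ^ k) measurableSet_Ici, compl_Ici]
  have hIio : ∫⁻ b in Iio (0:ℝ), gammaPDF 1 mu b * (ENNReal.ofReal b) ^ k = 0 := by
    have h0 : ∀ᵐ b ∂(volume.restrict (Iio (0:ℝ))),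
        gammaPDF 1 mu b * (ENNReal.ofReal b) ^ k = 0 := by
      filter_upwards [ae_restrict_mem measurableSet_Iio] with b hb
      simp [gammaPDF_of_neg hb]
    rw [lintegral_congr_ae h0, lintegral_zero]
  have hIci : ∫⁻ b in Ici (0:ℝ), gammaPDF 1 mu b * (ENNReal.ofReal b) ^ k
      = ∫⁻ b in Ici (0:ℝ), ENNReal.ofReal (mu * Real.exp (-(mu * b)) * b ^ k) := by
    refine lintegral_congr_ae ?_
    filter_upwards [ae_restrict_mem measurableSet_Ici] with b (hb : 0 ≤ b)
    have : gammaPDF 1 mu b = ENNReal.ofReal (mu * Real.exp (-(mu * b))) := by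
      rw [gammaPDF_of_nonneg hb]
      norm_num [Real.Gamma_one]
    rw [this, ← ENNReal.ofReal_pow hb, ← ENNReal.ofReal_mul (by positivity)]
  rw [hIio, hIci, add_zero,
    ← ofReal_integral_eq_lintegral_ofReal (integrableOn_pow_mul_exp hmu k)
      ((ae_restrict_iff' measurableSet_Ici).mpr (ae_of_all _ (fun b hb => by
        have hb' : (0:ℝ) ≤ b := hb
        positivity)))]
  congr 1
  rw [integral_Ici_eq_integral_Ioi]
  have : ∀ b ∈ Ioi (0:ℝ), mu * Real.exp (-(mu * b)) * b ^ k
      = mu * (b ^ ((k + 1 : ℝ) - 1) * Real.exp (-(mu * b))) := by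
    intro b hb
    rw [add_sub_cancel_right, Real.rpow_natCast]
    ring
  rw [setIntegral_congr_fun measurableSet_Ioi this, integral_const_mul,
    integral_rpow_mul_exp_neg_mul_Ioi (by positivity) hmu]
  rw [show ((k:ℝ) + 1) = ((k + 1 : ℕ) : ℝ) by push_cast; ring, Real.rpow_natCast]
  have hg : Real.Gamma ((k + 1 : ℕ) : ℝ) = (Nat.factorial k : ℝ) := by
    rw [Nat.cast_add, Nat.cast_one, Real.Gamma_nat_eq_factorial]
  rw [hg, div_pow, one_pow]
  field_simp
  ring



/-- indicator of membership in a finset, valued in ℝ≥0∞ -/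
noncomputable def chi (s : Finset ℕ) (i : ℕ) : ℝ≥0∞ := if i ∈ s then 1 else 0

lemma tsum_chi_mul (s : Finset ℕ) (h : ℕ → ℝ≥0∞) :
    ∑' i, chi s i * h i = ∑ i ∈ s, h i := by
  rw [tsum_eq_sum (s := s) (fun b hb => by simp [chi, hb])]
  exact Finset.sum_congr rfl fun i hi => by simp [chi, hi]

lemma tsum_chi (s : Finset ℕ) : ∑' i, chi s i = (s.card : ℝ≥0∞) := by
  have := tsum_chi_mul s (fun _ => 1)
  simpa using this

lemma chi_card_Icc (n : ℕ) : ∑' i, chi (Finset.Icc 1 n) i = (n : ℝ≥0∞) := by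
  rw [tsum_chi, Nat.card_Icc]; simp

lemma chi_double (n : ℕ) :
    ∑' i, ∑' j, chi (Finset.Icc 1 n) i * chi ((Finset.Icc 1 n).erase i) j
      = ((n * (n - 1) : ℕ) : ℝ≥0∞) := by
  have h1 : ∀ i, ∑' j, chi (Finset.Icc 1 n) i * chi ((Finset.Icc 1 n).erase i) j
      = chi (Finset.Icc 1 n) i * (((Finset.Icc 1 n).erase i).card : ℝ≥0∞) := by
    intro i
    rw [ENNReal.tsum_mul_left, tsum_chi]
  simp_rw [h1]
  have h2 : ∀ i, chi (Finset.Icc 1 n) i * (((Finset.Icc 1 n).erase i).card : ℝ≥0∞)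
      = chi (Finset.Icc 1 n) i * ((n - 1 : ℕ) : ℝ≥0∞) := by
    intro i
    by_cases hi : i ∈ Finset.Icc 1 n
    · rw [Finset.card_erase_of_mem hi, Nat.card_Icc]
      norm_num
    · simp [chi, hi]
  simp_rw [h2]
  rw [ENNReal.tsum_mul_right, tsum_chi, Nat.card_Icc]
  simp [Nat.cast_mul]



lemma sq_sum (s : Finset ℕ) (a : ℕ → ℝ≥0∞) :
    (∑ i ∈ s, a i) ^ 2 = (∑ i ∈ s, a i ^ 2) + ∑ i ∈ s, ∑ j ∈ s.erase i, a i * a j := by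
  rw [sq, Finset.sum_mul_sum, ← Finset.sum_add_distrib]
  refine Finset.sum_congr rfl fun i hi => ?_
  rw [← Finset.add_sum_erase _ _ hi, sq]

end EST



open MeasureTheory ProbabilityTheory

/-- Moments of the effective server time `Υ = B + ∑_{i=1}^{N} Ψ_i`, where
`B ∼ Exp(μ)`, conditionally on `B = b` the count `N ∼ Poisson(λ b)`, and the
`Ψ_i` are i.i.d. nonnegative with finite second moment, independent of `(B, N)`. -/
theorem effective_server_time_moments
    {Ω : Type*} [MeasurableSpace Ω] (P : Measure Ω) [IsProbabilityMeasure P]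
    (mu lam : ℝ) (hmu : 0 < mu) (hlam : 0 < lam)
    (B : Ω → ℝ) (N : Ω → ℕ) (hB : Measurable B) (hN : Measurable N)
    (κ : Kernel ℝ ℕ) [IsMarkovKernel κ]
    (hκ : ∀ b : ℝ, 0 ≤ b → κ b = poissonMeasure (Real.toNNReal (lam * b)))
    (hjoint : Measure.map (fun ω => (B ω, N ω)) P = (expMeasure mu).compProd κ)
    (Ψ : ℕ → Ω → ℝ) (hΨmeas : ∀ i, Measurable (Ψ i))
    (hΨnonneg : ∀ i ω, 0 ≤ Ψ i ω)
    (hiid : iIndepFun Ψ P)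
    (hident : ∀ i, Measure.map (Ψ i) P = Measure.map (Ψ 1) P)
    (hmom2 : MemLp (Ψ 1) 2 P)
    (hindep : IndepFun (fun ω => (B ω, N ω)) (fun ω i => Ψ i ω) P) :
    (∫ ω, (B ω + ∑ i ∈ Finset.Icc 1 (N ω), Ψ i ω) ∂P
        = 1 / mu + (lam / mu) * ∫ ω, Ψ 1 ω ∂P)
    ∧ (∫ ω, (B ω + ∑ i ∈ Finset.Icc 1 (N ω), Ψ i ω) ^ 2 ∂P
        = 2 / mu ^ 2 + 4 * lam * (∫ ω, Ψ 1 ω ∂P) / mu ^ 2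
          + lam * (∫ ω, (Ψ 1 ω) ^ 2 ∂P) / mu
          + 2 * lam ^ 2 * (∫ ω, Ψ 1 ω ∂P) ^ 2 / mu ^ 2) := by
  classical
  haveI : IsProbabilityMeasure (expMeasure mu) := isProbabilityMeasure_expMeasure hmu
  have hcoe : ∀ x : ℝ, ((Real.toNNReal x : ℝ≥0) : ℝ≥0∞) = ENNReal.ofReal x := fun x => rfl
  let S : Ω → ℝ := fun ω => ∑ i ∈ Finset.Icc 1 (N ω), Ψ i ω
  let m1 : ℝ := ∫ ω, Ψ 1 ω ∂P
  let m2 : ℝ := ∫ ω, (Ψ 1 ω) ^ 2 ∂P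
  have hm1 : 0 ≤ m1 := integral_nonneg (fun ω => hΨnonneg 1 ω)
  have hm2 : 0 ≤ m2 := integral_nonneg (fun ω => sq_nonneg _)
  have hpair : Measurable fun ω => (B ω, N ω) := hB.prodMk hN
  have hY : Measurable fun ω (i : ℕ) => Ψ i ω := measurable_pi_lambda _ hΨmeas
  -- transfer of joint-law integrals
  have red : ∀ Φ : ℝ × ℕ → ℝ≥0∞, Measurable Φ →
      ∫⁻ ω, Φ (B ω, N ω) ∂P
        = ∫⁻ b, ∫⁻ n, Φ (b, n) ∂(poissonMeasure (Real.toNNReal (lam * b))) ∂expMeasure mu := by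
    intro Φ hΦ
    rw [← lintegral_map hΦ hpair, hjoint, Measure.lintegral_compProd hΦ]
    refine lintegral_congr_ae ?_
    filter_upwards [EST.exp_ae_nonneg] with b hb
    rw [hκ b hb]
  -- law integrals
  have IB : ∫⁻ ω, ENNReal.ofReal (B ω) ∂P = ENNReal.ofReal (1 / mu) := by
    rw [red (fun p => ENNReal.ofReal p.1) (ENNReal.measurable_ofReal.comp measurable_fst)]
    have h1 : ∀ b : ℝ, ∫⁻ _, ENNReal.ofReal b ∂(poissonMeasure (Real.toNNReal (lam * b)))
        = ENNReal.ofReal b := by intro b; rw [lintegral_const, measure_univ, mul_one]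
    simp_rw [h1]
    have h2 := EST.exp_moment hmu 1
    simpa [Nat.factorial] using h2
  have IB2 : ∫⁻ ω, ENNReal.ofReal (B ω) ^ 2 ∂P = ENNReal.ofReal (2 / mu ^ 2) := by
    rw [red (fun p => ENNReal.ofReal p.1 ^ 2)
      ((ENNReal.measurable_ofReal.comp measurable_fst).pow_const 2)]
    have h1 : ∀ b : ℝ, ∫⁻ _, ENNReal.ofReal b ^ 2 ∂(poissonMeasure (Real.toNNReal (lam * b)))
        = ENNReal.ofReal b ^ 2 := by intro b; rw [lintegral_const, measure_univ, mul_one]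
    simp_rw [h1]
    have h2 := EST.exp_moment hmu 2
    have hfac : (Nat.factorial 2 : ℝ) = 2 := by norm_num [Nat.factorial]
    rw [h2, hfac]
  have IN : ∫⁻ ω, (N ω : ℝ≥0∞) ∂P = ENNReal.ofReal (lam / mu) := by
    rw [red (fun p => (p.2 : ℝ≥0∞)) (measurable_from_top.comp measurable_snd)]
    have h1 : ∫⁻ b, ∫⁻ n, (n : ℝ≥0∞) ∂(poissonMeasure (Real.toNNReal (lam * b))) ∂expMeasure mu
        = ∫⁻ b, ENNReal.ofReal lam * (ENNReal.ofReal b) ^ 1 ∂expMeasure mu := by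
      refine lintegral_congr_ae ?_
      filter_upwards [EST.exp_ae_nonneg] with b hb
      rw [EST.poisson_mean, hcoe, ENNReal.ofReal_mul hlam.le, pow_one]
    rw [h1, lintegral_const_mul _ (ENNReal.measurable_ofReal.pow_const 1),
      EST.exp_moment hmu 1, ← ENNReal.ofReal_mul hlam.le]
    norm_num [Nat.factorial, div_eq_mul_inv]
  have IBN : ∫⁻ ω, ENNReal.ofReal (B ω) * (N ω : ℝ≥0∞) ∂P
      = ENNReal.ofReal (2 * lam / mu ^ 2) := by
    rw [red (fun p => ENNReal.ofReal p.1 * (p.2 : ℝ≥0∞))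
      ((ENNReal.measurable_ofReal.comp measurable_fst).mul
        (measurable_from_top.comp measurable_snd))]
    have h1 : ∫⁻ b, ∫⁻ n, ENNReal.ofReal b * (n : ℝ≥0∞)
          ∂(poissonMeasure (Real.toNNReal (lam * b))) ∂expMeasure mu
        = ∫⁻ b, ENNReal.ofReal lam * (ENNReal.ofReal b) ^ 2 ∂expMeasure mu := by
      refine lintegral_congr_ae ?_
      filter_upwards [EST.exp_ae_nonneg] with b hb
      rw [lintegral_const_mul _ measurable_from_top, EST.poisson_mean, hcoe,
        ENNReal.ofReal_mul hlam.le]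
      ring
    rw [h1, lintegral_const_mul _ (ENNReal.measurable_ofReal.pow_const 2),
      EST.exp_moment hmu 2, ← ENNReal.ofReal_mul hlam.le]
    have : lam * ((Nat.factorial 2 : ℝ) / mu ^ 2) = 2 * lam / mu ^ 2 := by
      norm_num [Nat.factorial]; ring
    rw [this]
  have INN : ∫⁻ ω, ((N ω * (N ω - 1) : ℕ) : ℝ≥0∞) ∂P
      = ENNReal.ofReal (2 * lam ^ 2 / mu ^ 2) := by
    rw [red (fun p => ((p.2 * (p.2 - 1) : ℕ) : ℝ≥0∞))
      ((measurable_from_top (f := fun n : ℕ => ((n * (n - 1) : ℕ) : ℝ≥0∞))).comp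
        measurable_snd)]
    have h1 : ∫⁻ b, ∫⁻ n, ((n * (n - 1) : ℕ) : ℝ≥0∞)
          ∂(poissonMeasure (Real.toNNReal (lam * b))) ∂expMeasure mu
        = ∫⁻ b, ENNReal.ofReal (lam ^ 2) * (ENNReal.ofReal b) ^ 2 ∂expMeasure mu := by
      refine lintegral_congr_ae ?_
      filter_upwards [EST.exp_ae_nonneg] with b hb
      rw [EST.poisson_factorial2, hcoe, ENNReal.ofReal_mul hlam.le, mul_pow,
        ← ENNReal.ofReal_pow hlam.le]
    rw [h1, lintegral_const_mul _ (ENNReal.measurable_ofReal.pow_const 2),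
      EST.exp_moment hmu 2, ← ENNReal.ofReal_mul (by positivity)]
    have : lam ^ 2 * ((Nat.factorial 2 : ℝ) / mu ^ 2) = 2 * lam ^ 2 / mu ^ 2 := by
      norm_num [Nat.factorial]; ring
    rw [this]
  -- Ψ moments
  have hint1 : Integrable (Ψ 1) P := hmom2.integrable one_le_two
  have hint2 : Integrable (fun ω => (Ψ 1 ω) ^ 2) P := hmom2.integrable_sq
  have e1 : ∫⁻ ω, ENNReal.ofReal (Ψ 1 ω) ∂P = ENNReal.ofReal m1 :=
    (ofReal_integral_eq_lintegral_ofReal hint1 (ae_of_all _ (hΨnonneg 1))).symm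
  have e2 : ∫⁻ ω, ENNReal.ofReal (Ψ 1 ω) ^ 2 ∂P = ENNReal.ofReal m2 := by
    have h := (ofReal_integral_eq_lintegral_ofReal hint2
      (ae_of_all _ fun ω => sq_nonneg _)).symm
    rw [lintegral_congr fun ω => (ENNReal.ofReal_pow (hΨnonneg 1 ω) 2).symm]
    exact h
  have eI : ∀ i, ∫⁻ ω, ENNReal.ofReal (Ψ i ω) ∂P = ENNReal.ofReal m1 := by
    intro i
    rw [← lintegral_map ENNReal.measurable_ofReal (hΨmeas i), hident i,
      lintegral_map ENNReal.measurable_ofReal (hΨmeas 1), e1]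
  have eI2 : ∀ i, ∫⁻ ω, ENNReal.ofReal (Ψ i ω) ^ 2 ∂P = ENNReal.ofReal m2 := by
    intro i
    rw [← lintegral_map (ENNReal.measurable_ofReal.pow_const 2) (hΨmeas i), hident i,
      lintegral_map (ENNReal.measurable_ofReal.pow_const 2) (hΨmeas 1), e2]
  -- independence factorizations
  have hfact : ∀ (φ : ℝ × ℕ → ℝ≥0∞), Measurable φ → ∀ (ψ : (ℕ → ℝ) → ℝ≥0∞), Measurable ψ →
      ∫⁻ ω, φ (B ω, N ω) * ψ (fun i => Ψ i ω) ∂P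
        = (∫⁻ ω, φ (B ω, N ω) ∂P) * ∫⁻ ω, ψ (fun i => Ψ i ω) ∂P := by
    intro φ hφ ψ hψ
    exact lintegral_mul_eq_lintegral_mul_lintegral_of_indepFun''
      (hφ.comp hpair).aemeasurable (hψ.comp hY).aemeasurable (hindep.comp hφ hψ)
  have hψpair : ∀ i j, i ≠ j →
      ∫⁻ ω, ENNReal.ofReal (Ψ i ω) * ENNReal.ofReal (Ψ j ω) ∂P
        = ENNReal.ofReal m1 * ENNReal.ofReal m1 := by
    intro i j hij
    have h := lintegral_mul_eq_lintegral_mul_lintegral_of_indepFun''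
      (f := fun ω => ENNReal.ofReal (Ψ i ω)) (g := fun ω => ENNReal.ofReal (Ψ j ω))
      ((hΨmeas i).ennreal_ofReal).aemeasurable
      ((hΨmeas j).ennreal_ofReal).aemeasurable
      ((hiid.indepFun hij).comp ENNReal.measurable_ofReal ENNReal.measurable_ofReal)
    rw [eI i, eI j] at h
    exact h
  -- measurability of S
  have hSmeas : Measurable S := by
    have h : Measurable fun p : Ω × ℕ => ∑ i ∈ Finset.Icc 1 p.2, Ψ i p.1 :=
      measurable_from_prod_countable_left fun n => by
        simpa using Finset.measurable_sum (Finset.Icc 1 n) (fun i _ => hΨmeas i)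
    exact h.comp (measurable_id.prodMk hN)
  have hSnonneg : ∀ ω, 0 ≤ S ω := fun ω => Finset.sum_nonneg fun i _ => hΨnonneg i ω
  -- chi abbreviations
  let χ : ℕ → Ω → ℝ≥0∞ := fun i ω => EST.chi (Finset.Icc 1 (N ω)) i
  have hχmeas : ∀ i, Measurable (χ i) :=
    fun i => (measurable_from_top (f := fun n : ℕ => EST.chi (Finset.Icc 1 n) i)).comp hN
  let χ' : ℕ → ℕ → Ω → ℝ≥0∞ := fun i j ω => EST.chi ((Finset.Icc 1 (N ω)).erase i) j
  have hχ'meas : ∀ i j, Measurable (χ' i j) :=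
    fun i j => (measurable_from_top
      (f := fun n : ℕ => EST.chi ((Finset.Icc 1 n).erase i) j)).comp hN
  have hofS : ∀ ω, ENNReal.ofReal (S ω) = ∑' i, χ i ω * ENNReal.ofReal (Ψ i ω) := by
    intro ω
    rw [EST.tsum_chi_mul]
    exact ENNReal.ofReal_sum_of_nonneg fun i _ => hΨnonneg i ω
  have hχN : ∀ ω, ∑' i, χ i ω = (N ω : ℝ≥0∞) := fun ω => EST.chi_card_Icc (N ω)
  -- E[S]
  have IS : ∫⁻ ω, ENNReal.ofReal (S ω) ∂P = ENNReal.ofReal (lam / mu) * ENNReal.ofReal m1 := by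
    rw [lintegral_congr hofS,
      lintegral_tsum (f := fun i ω => χ i ω * ENNReal.ofReal (Ψ i ω)) (fun i => ((hχmeas i).mul
        ((hΨmeas i).ennreal_ofReal)).aemeasurable)]
    have hterm : ∀ i, ∫⁻ ω, χ i ω * ENNReal.ofReal (Ψ i ω) ∂P
        = (∫⁻ ω, χ i ω ∂P) * ENNReal.ofReal m1 := by
      intro i
      have h := hfact (fun p => EST.chi (Finset.Icc 1 p.2) i)
        ((measurable_from_top (f := fun n : ℕ => EST.chi (Finset.Icc 1 n) i)).comp
          measurable_snd)
        (fun v => ENNReal.ofReal (v i))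
        ((measurable_pi_apply i).ennreal_ofReal)
      simpa [eI i] using h
    simp_rw [hterm]
    rw [ENNReal.tsum_mul_right, ← lintegral_tsum (fun i => (hχmeas i).aemeasurable),
      lintegral_congr hχN, IN]
  -- E[B S]
  have ICross : ∫⁻ ω, ENNReal.ofReal (B ω) * ENNReal.ofReal (S ω) ∂P
      = ENNReal.ofReal (2 * lam / mu ^ 2) * ENNReal.ofReal m1 := by
    have hpt : ∀ ω, ENNReal.ofReal (B ω) * ENNReal.ofReal (S ω)
        = ∑' i, (ENNReal.ofReal (B ω) * χ i ω) * ENNReal.ofReal (Ψ i ω) := by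
      intro ω
      rw [hofS ω, ← ENNReal.tsum_mul_left]
      exact tsum_congr fun i => by ring
    rw [lintegral_congr hpt,
      lintegral_tsum (f := fun i ω => (ENNReal.ofReal (B ω) * χ i ω) * ENNReal.ofReal (Ψ i ω)) (fun i => (((hB.ennreal_ofReal).mul (hχmeas i)).mul
        ((hΨmeas i).ennreal_ofReal)).aemeasurable)]
    have hterm : ∀ i, ∫⁻ ω, (ENNReal.ofReal (B ω) * χ i ω) * ENNReal.ofReal (Ψ i ω) ∂P
        = (∫⁻ ω, ENNReal.ofReal (B ω) * χ i ω ∂P) * ENNReal.ofReal m1 := by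
      intro i
      have h := hfact (fun p => ENNReal.ofReal p.1 * EST.chi (Finset.Icc 1 p.2) i)
        ((ENNReal.measurable_ofReal.comp measurable_fst).mul
          ((measurable_from_top (f := fun n : ℕ => EST.chi (Finset.Icc 1 n) i)).comp
            measurable_snd))
        (fun v => ENNReal.ofReal (v i))
        ((measurable_pi_apply i).ennreal_ofReal)
      simpa [eI i] using h
    simp_rw [hterm]
    rw [ENNReal.tsum_mul_right,
      ← lintegral_tsum (f := fun i ω => ENNReal.ofReal (B ω) * χ i ω) (fun i => ((hB.ennreal_ofReal).mul
        (hχmeas i)).aemeasurable)]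
    have hpt2 : ∀ ω, ∑' i, ENNReal.ofReal (B ω) * χ i ω
        = ENNReal.ofReal (B ω) * (N ω : ℝ≥0∞) := by
      intro ω; rw [ENNReal.tsum_mul_left, hχN]
    rw [lintegral_congr hpt2, IBN]
  -- E[S^2] pieces
  have IDiag : ∫⁻ ω, ∑' i, χ i ω * ENNReal.ofReal (Ψ i ω) ^ 2 ∂P
      = ENNReal.ofReal (lam / mu) * ENNReal.ofReal m2 := by
    rw [lintegral_tsum (f := fun i ω => χ i ω * ENNReal.ofReal (Ψ i ω) ^ 2) (fun i => ((hχmeas i).mul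
      (((hΨmeas i).ennreal_ofReal.pow_const 2))).aemeasurable)]
    have hterm : ∀ i, ∫⁻ ω, χ i ω * ENNReal.ofReal (Ψ i ω) ^ 2 ∂P
        = (∫⁻ ω, χ i ω ∂P) * ENNReal.ofReal m2 := by
      intro i
      have h := hfact (fun p => EST.chi (Finset.Icc 1 p.2) i)
        ((measurable_from_top (f := fun n : ℕ => EST.chi (Finset.Icc 1 n) i)).comp
          measurable_snd)
        (fun v => ENNReal.ofReal (v i) ^ 2)
        (((measurable_pi_apply i).ennreal_ofReal).pow_const 2)
      simpa [eI2 i] using h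
    simp_rw [hterm]
    rw [ENNReal.tsum_mul_right, ← lintegral_tsum (fun i => (hχmeas i).aemeasurable),
      lintegral_congr hχN, IN]
  have IOff : ∫⁻ ω, ∑' i, ∑' j,
        (χ i ω * χ' i j ω) * (ENNReal.ofReal (Ψ i ω) * ENNReal.ofReal (Ψ j ω)) ∂P
      = ENNReal.ofReal (2 * lam ^ 2 / mu ^ 2) * (ENNReal.ofReal m1 * ENNReal.ofReal m1) := by
    have hmeasij : ∀ i j, Measurable fun ω =>
        (χ i ω * χ' i j ω) * (ENNReal.ofReal (Ψ i ω) * ENNReal.ofReal (Ψ j ω)) :=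
      fun i j => ((hχmeas i).mul (hχ'meas i j)).mul
        (((hΨmeas i).ennreal_ofReal).mul
          ((hΨmeas j).ennreal_ofReal))
    rw [lintegral_tsum (fun i => (Measurable.ennreal_tsum
      (fun j => hmeasij i j)).aemeasurable)]
    have hswap : ∀ i, ∫⁻ ω, ∑' j,
          (χ i ω * χ' i j ω) * (ENNReal.ofReal (Ψ i ω) * ENNReal.ofReal (Ψ j ω)) ∂P
        = ∑' j, ∫⁻ ω,
          (χ i ω * χ' i j ω) * (ENNReal.ofReal (Ψ i ω) * ENNReal.ofReal (Ψ j ω)) ∂P :=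
      fun i => lintegral_tsum (fun j => (hmeasij i j).aemeasurable)
    simp_rw [hswap]
    have hterm : ∀ i j, ∫⁻ ω,
          (χ i ω * χ' i j ω) * (ENNReal.ofReal (Ψ i ω) * ENNReal.ofReal (Ψ j ω)) ∂P
        = (∫⁻ ω, χ i ω * χ' i j ω ∂P) * (ENNReal.ofReal m1 * ENNReal.ofReal m1) := by
      intro i j
      by_cases hij : j = i
      · subst hij
        have hz : ∀ ω, χ' j j ω = 0 := fun ω => by
          simp [χ', EST.chi, Finset.notMem_erase]
        simp [hz]
      · have h := hfact
          (fun p => EST.chi (Finset.Icc 1 p.2) i * EST.chi ((Finset.Icc 1 p.2).erase i) j)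
          (((measurable_from_top (f := fun n : ℕ => EST.chi (Finset.Icc 1 n) i)).comp
              measurable_snd).mul
            ((measurable_from_top (f := fun n : ℕ => EST.chi ((Finset.Icc 1 n).erase i) j)).comp
              measurable_snd))
          (fun v => ENNReal.ofReal (v i) * ENNReal.ofReal (v j))
          (((measurable_pi_apply i).ennreal_ofReal).mul
            ((measurable_pi_apply j).ennreal_ofReal))
        rw [hψpair i j (Ne.symm hij)] at h
        exact h
    simp_rw [hterm]
    have hsum : ∑' i, ∑' j, (∫⁻ ω, χ i ω * χ' i j ω ∂P)
          * (ENNReal.ofReal m1 * ENNReal.ofReal m1)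
        = (∑' i, ∑' j, ∫⁻ ω, χ i ω * χ' i j ω ∂P)
          * (ENNReal.ofReal m1 * ENNReal.ofReal m1) := by
      rw [← ENNReal.tsum_mul_right]
      exact tsum_congr fun i => by rw [ENNReal.tsum_mul_right]
    rw [hsum]
    have hcount : ∑' i, ∑' j, ∫⁻ ω, χ i ω * χ' i j ω ∂P
        = ∫⁻ ω, ((N ω * (N ω - 1) : ℕ) : ℝ≥0∞) ∂P := by
      have h1 : ∀ i, ∑' j, ∫⁻ ω, χ i ω * χ' i j ω ∂P
          = ∫⁻ ω, ∑' j, χ i ω * χ' i j ω ∂P :=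
        fun i => (lintegral_tsum (fun j => ((hχmeas i).mul (hχ'meas i j)).aemeasurable)).symm
      simp_rw [h1]
      rw [← lintegral_tsum (f := fun i ω => ∑' j, χ i ω * χ' i j ω) (fun i => (Measurable.ennreal_tsum
        (fun j => (hχmeas i).mul (hχ'meas i j))).aemeasurable)]
      exact lintegral_congr fun ω => EST.chi_double (N ω)
    rw [hcount, INN]
  -- a.e. nonnegativity of B
  have hBlaw : Measure.map B P = expMeasure mu := by
    have hcomp : B = Prod.fst ∘ fun ω => (B ω, N ω) := rfl
    rw [hcomp, ← Measure.map_map measurable_fst hpair, hjoint]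
    exact Measure.fst_compProd (expMeasure mu) κ
  have hBae : ∀ᵐ ω ∂P, 0 ≤ B ω := by
    rw [ae_iff]
    have hset : {ω | ¬ 0 ≤ B ω} = B ⁻¹' (Set.Iio 0) := by
      ext ω; simp [Set.mem_Iio, not_le]
    rw [hset, ← Measure.map_apply hB measurableSet_Iio, hBlaw, expMeasure, gammaMeasure,
      withDensity_apply _ measurableSet_Iio]
    exact lintegral_gammaPDF_of_nonpos le_rfl
  -- first moment
  have hA1 : ∫⁻ ω, ENNReal.ofReal (B ω + S ω) ∂P
      = ENNReal.ofReal (1 / mu + lam / mu * m1) := by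
    rw [lintegral_congr_ae (hBae.mono fun ω hb => ENNReal.ofReal_add hb (hSnonneg ω)),
      lintegral_add_left (hB.ennreal_ofReal), IB, IS,
      ← ENNReal.ofReal_mul (by positivity),
      ← ENNReal.ofReal_add (by positivity) (mul_nonneg (by positivity) hm1)]
  -- second moment
  have hA2 : ∫⁻ ω, ENNReal.ofReal ((B ω + S ω) ^ 2) ∂P
      = ENNReal.ofReal (2 / mu ^ 2 + 4 * lam * m1 / mu ^ 2 + lam * m2 / mu
        + 2 * lam ^ 2 * m1 ^ 2 / mu ^ 2) := by
    have hpt : ∀ᵐ ω ∂P, ENNReal.ofReal ((B ω + S ω) ^ 2)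
        = ENNReal.ofReal (B ω) ^ 2 + 2 * (ENNReal.ofReal (B ω) * ENNReal.ofReal (S ω))
          + ((∑' i, χ i ω * ENNReal.ofReal (Ψ i ω) ^ 2)
            + ∑' i, ∑' j, (χ i ω * χ' i j ω)
              * (ENNReal.ofReal (Ψ i ω) * ENNReal.ofReal (Ψ j ω))) := by
      filter_upwards [hBae] with ω hb
      have hS2 : ENNReal.ofReal (S ω) ^ 2
          = (∑' i, χ i ω * ENNReal.ofReal (Ψ i ω) ^ 2)
            + ∑' i, ∑' j, (χ i ω * χ' i j ω)
              * (ENNReal.ofReal (Ψ i ω) * ENNReal.ofReal (Ψ j ω)) := by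
        have hfin : ENNReal.ofReal (S ω)
            = ∑ i ∈ Finset.Icc 1 (N ω), ENNReal.ofReal (Ψ i ω) :=
          ENNReal.ofReal_sum_of_nonneg fun i _ => hΨnonneg i ω
        rw [hfin, EST.sq_sum]
        congr 1
        · rw [← EST.tsum_chi_mul (Finset.Icc 1 (N ω)) (fun i => ENNReal.ofReal (Ψ i ω) ^ 2)]
        · rw [← EST.tsum_chi_mul (Finset.Icc 1 (N ω))
            (fun i => ∑ j ∈ (Finset.Icc 1 (N ω)).erase i,
              ENNReal.ofReal (Ψ i ω) * ENNReal.ofReal (Ψ j ω))]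
          refine tsum_congr fun i => ?_
          rw [← EST.tsum_chi_mul ((Finset.Icc 1 (N ω)).erase i)
            (fun j => ENNReal.ofReal (Ψ i ω) * ENNReal.ofReal (Ψ j ω)),
            ← ENNReal.tsum_mul_left]
          exact tsum_congr fun j => by ring
      rw [ENNReal.ofReal_pow (add_nonneg hb (hSnonneg ω)), ENNReal.ofReal_add hb (hSnonneg ω),
        add_sq, hS2]
      ring
    rw [lintegral_congr_ae hpt]
    have hmB2 : Measurable fun ω => ENNReal.ofReal (B ω) ^ 2 :=
      (hB.ennreal_ofReal).pow_const 2
    have hmBS : Measurable fun ω => 2 * (ENNReal.ofReal (B ω) * ENNReal.ofReal (S ω)) :=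
      (((hB.ennreal_ofReal).mul
        (hSmeas.ennreal_ofReal)).const_mul 2)
    have hmD : Measurable fun ω => ∑' i, χ i ω * ENNReal.ofReal (Ψ i ω) ^ 2 :=
      Measurable.ennreal_tsum fun i => (hχmeas i).mul
        (((hΨmeas i).ennreal_ofReal.pow_const 2))
    rw [lintegral_add_left (f := fun ω => ENNReal.ofReal (B ω) ^ 2 + 2 * (ENNReal.ofReal (B ω) * ENNReal.ofReal (S ω))) (hmB2.add hmBS), lintegral_add_left hmB2,
      lintegral_add_left hmD, IB2, IDiag, IOff]
    have h2 : ∫⁻ ω, 2 * (ENNReal.ofReal (B ω) * ENNReal.ofReal (S ω)) ∂P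
        = 2 * (ENNReal.ofReal (2 * lam / mu ^ 2) * ENNReal.ofReal m1) := by
      rw [lintegral_const_mul _ (f := fun ω => ENNReal.ofReal (B ω) * ENNReal.ofReal (S ω)) ((hB.ennreal_ofReal).mul
        (hSmeas.ennreal_ofReal)), ICross]
    rw [h2]
    have hp2 : (0:ℝ) ≤ 4 * lam * m1 / mu ^ 2 :=
      div_nonneg (mul_nonneg (by positivity) hm1) (by positivity)
    have hp3 : (0:ℝ) ≤ lam * m2 / mu := div_nonneg (mul_nonneg hlam.le hm2) hmu.le
    have hp4 : (0:ℝ) ≤ 2 * lam ^ 2 * m1 ^ 2 / mu ^ 2 := by positivity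
    have hpiece2 : 2 * (ENNReal.ofReal (2 * lam / mu ^ 2) * ENNReal.ofReal m1)
        = ENNReal.ofReal (4 * lam * m1 / mu ^ 2) := by
      rw [← ENNReal.ofReal_mul (by positivity), ← ENNReal.ofReal_ofNat 2,
        ← ENNReal.ofReal_mul (by norm_num)]
      congr 1
      ring
    have hpiece3 : ENNReal.ofReal (lam / mu) * ENNReal.ofReal m2
        = ENNReal.ofReal (lam * m2 / mu) := by
      rw [← ENNReal.ofReal_mul (by positivity)]
      congr 1
      ring
    have hpiece4 : ENNReal.ofReal (2 * lam ^ 2 / mu ^ 2) * (ENNReal.ofReal m1 * ENNReal.ofReal m1)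
        = ENNReal.ofReal (2 * lam ^ 2 * m1 ^ 2 / mu ^ 2) := by
      rw [← ENNReal.ofReal_mul hm1, ← ENNReal.ofReal_mul (by positivity)]
      congr 1
      ring
    rw [hpiece2, hpiece3, hpiece4,
      ← ENNReal.ofReal_add (by positivity) hp2,
      ← ENNReal.ofReal_add hp3 hp4,
      ← ENNReal.ofReal_add (add_nonneg (by positivity) hp2) (add_nonneg hp3 hp4)]
    congr 1
    ring
  -- conclusion
  have hmeasBS : AEStronglyMeasurable (fun ω => B ω + S ω) P :=
    (hB.add hSmeas).aestronglyMeasurable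
  have goal1 : ∫ ω, (B ω + S ω) ∂P = 1 / mu + lam / mu * m1 := by
    rw [integral_eq_lintegral_of_nonneg_ae (hBae.mono fun ω hb => add_nonneg hb (hSnonneg ω))
      hmeasBS, hA1, ENNReal.toReal_ofReal (by positivity)]
  have goal2 : ∫ ω, (B ω + S ω) ^ 2 ∂P
      = 2 / mu ^ 2 + 4 * lam * m1 / mu ^ 2 + lam * m2 / mu
        + 2 * lam ^ 2 * m1 ^ 2 / mu ^ 2 := by
    rw [integral_eq_lintegral_of_nonneg_ae (f := fun ω => (B ω + S ω) ^ 2) (ae_of_all _ fun ω => sq_nonneg _)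
      ((hB.add hSmeas).pow_const 2).aestronglyMeasurable, hA2,
      ENNReal.toReal_ofReal (by positivity)]
  exact ⟨by rw [goal1], by rw [goal2]⟩
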